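/- If p, q, r are integers each ≥ 2 satisfying 1/p + 1/q + 1/r < 1, then 1/p + 1/q + 1/r ≤ 41/42. -/

import Mathlib

lemma reciprocal_sum_gap_aux (p q r : ℤ) (hp : 2 ≤ p) (hpq : p ≤ q) (hqr : q ≤ r)
    (h : (1 : ℚ) / p + 1 / q + 1 / r < 1) :
    (1 : ℚ) / p + 1 / q + 1 / r ≤ 41 / 42 := by
  have hq : 2 ≤ q := le_trans hp hpq
  have hr : 2 ≤ r := le_trans hq hqr
  have hp' : (2:ℚ) ≤ (p:ℚ) := by exact_mod_cast hp
  have hq' : (2:ℚ) ≤ (q:ℚ) := by exact_mod_cast hq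
  have hr' : (2:ℚ) ≤ (r:ℚ) := by exact_mod_cast hr
  have hp0 : (0:ℚ) < p := by linarith
  have hq0 : (0:ℚ) < q := by linarith
  have hr0 : (0:ℚ) < r := by linarith
  have hpq' : (p:ℚ) ≤ q := by exact_mod_cast hpq
  have hqr' : (q:ℚ) ≤ r := by exact_mod_cast hqr
  have h1 : 1/(q:ℚ) ≤ 1/(p:ℚ) := one_div_le_one_div_of_le hp0 hpq'
  have h2 : 1/(r:ℚ) ≤ 1/(q:ℚ) := one_div_le_one_div_of_le hq0 hqr'
  rcases le_or_gt 4 p with h4 | h4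
  · have : (1:ℚ)/p ≤ 1/4 := one_div_le_one_div_of_le (by norm_num) (by exact_mod_cast h4)
    linarith
  · interval_cases p
    · -- p = 2
      rcases le_or_gt 5 q with h5 | h5
      · have hq4 : (1:ℚ)/q ≤ 1/5 :=
          one_div_le_one_div_of_le (by norm_num) (by exact_mod_cast h5)
        push_cast at h ⊢
        linarith
      · interval_cases q
        · -- q = 2
          have : (0:ℚ) < 1/r := by positivity
          norm_num at h
          linarith
        · -- q = 3
          rcases le_or_gt 7 r with h7 | h7
          · have : (1:ℚ)/r ≤ 1/7 :=
              one_div_le_one_div_of_le (by norm_num) (by exact_mod_cast h7)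
            push_cast at h ⊢
            linarith
          · interval_cases r <;> norm_num at h
        · -- q = 4
          rcases le_or_gt 5 r with h5 | h5
          · have : (1:ℚ)/r ≤ 1/5 :=
              one_div_le_one_div_of_le (by norm_num) (by exact_mod_cast h5)
            push_cast at h ⊢
            linarith
          · interval_cases r <;> norm_num at h
    · -- p = 3
      rcases le_or_gt 4 q with h4q | h4q
      · have hq4 : (1:ℚ)/q ≤ 1/4 :=
          one_div_le_one_div_of_le (by norm_num) (by exact_mod_cast h4q)
        push_cast at h ⊢
        linarith
      · interval_cases q
        · -- q = 3
          rcases le_or_gt 4 r with h4r | h4r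
          · have : (1:ℚ)/r ≤ 1/4 :=
              one_div_le_one_div_of_le (by norm_num) (by exact_mod_cast h4r)
            push_cast at h ⊢
            linarith
          · interval_cases r <;> norm_num at h

theorem reciprocal_sum_gap (p q r : ℤ) (hp : 2 ≤ p) (hq : 2 ≤ q) (hr : 2 ≤ r)
    (h : (1 : ℚ) / p + 1 / q + 1 / r < 1) :
    (1 : ℚ) / p + 1 / q + 1 / r ≤ 41 / 42 := by
  rcases le_total p q with h1 | h1 <;> rcases le_total q r with h2 | h2 <;>
    rcases le_total p r with h3 | h3
  · linarith [reciprocal_sum_gap_aux p q r hp h1 h2 (by linarith)]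
  · linarith [reciprocal_sum_gap_aux p q r hp h1 h2 (by linarith)]
  · linarith [reciprocal_sum_gap_aux p r q hp h3 (by linarith) (by linarith)]
  · linarith [reciprocal_sum_gap_aux r p q hr h3 h1 (by linarith)]
  · linarith [reciprocal_sum_gap_aux q p r hq h1 h3 (by linarith)]
  · linarith [reciprocal_sum_gap_aux q r p hq h2 (by linarith) (by linarith)]
  · linarith [reciprocal_sum_gap_aux r q p hr h2 h1 (by linarith)]
  · linarith [reciprocal_sum_gap_aux r q p hr h2 h1 (by linarith)]
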